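/- Let λ₁ ≥ λ₂ ≥ 2, h₁ ≥ h₂ ≥ 2, h₁ ≤ m ≤ h₁+h₂+λ₂−3, and set m' = λ₁+λ₂+h₁+h₂−3−m. Then the rational number ((λ₁−λ₂+1)/(m−h₂+1))·C(λ₁+h₁−2, m−h₂)·C(λ₂+h₁−3, m−h₂)·C(m−h₂, m−h₁)·C(λ₂+h₂−4, h₂−2)·C(λ₁+h₂−3, h₂−2)/C(h₁−1, h₂−2) equals ((h₁−h₂+1)/(m'−λ₂+1))·C(h₁+λ₁−2, m'−λ₂)·C(h₂+λ₁−3, m'−λ₂)·C(m'−λ₂, m'−λ₁)·C(h₁+λ₂−3, λ₂−2)·C(h₂+λ₂−4, λ₂−2)/C(λ₁−1, λ₂−2). -/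

import Mathlib

lemma key (q d s r a e : ℕ) (h : a + e = q + s + 1) :
    ((d + 1 : ℕ) : ℚ) / ((r + a + 1 : ℕ) : ℚ) *
      ((q + d + s + r + 2).choose (r + a) : ℚ) * ((q + s + r + 1).choose (r + a) : ℚ) *
      ((r + a).choose a : ℚ) * ((q + s).choose s : ℚ) *
      ((q + d + s + 1).choose s : ℚ) / (((s + r + 1).choose s : ℕ) : ℚ) =
    ((r + 1 : ℕ) : ℚ) / ((e + d + 1 : ℕ) : ℚ) *
      ((q + d + s + r + 2).choose (e + d) : ℚ) * ((q + d + s + 1).choose (e + d) : ℚ) *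
      ((e + d).choose e : ℚ) * ((q + s + r + 1).choose q : ℚ) * ((q + s).choose q : ℚ) /
      (((q + d + 1).choose q : ℕ) : ℚ) := by
  rw [Nat.cast_choose ℚ (by omega : r + a ≤ q + d + s + r + 2),
      Nat.cast_choose ℚ (by omega : r + a ≤ q + s + r + 1),
      Nat.cast_choose ℚ (by omega : a ≤ r + a),
      Nat.cast_choose ℚ (by omega : s ≤ q + s),
      Nat.cast_choose ℚ (by omega : s ≤ q + d + s + 1),
      Nat.cast_choose ℚ (by omega : s ≤ s + r + 1),
      Nat.cast_choose ℚ (by omega : e + d ≤ q + d + s + r + 2),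
      Nat.cast_choose ℚ (by omega : e + d ≤ q + d + s + 1),
      Nat.cast_choose ℚ (by omega : e ≤ e + d),
      Nat.cast_choose ℚ (by omega : q ≤ q + s + r + 1),
      Nat.cast_choose ℚ (by omega : q ≤ q + s),
      Nat.cast_choose ℚ (by omega : q ≤ q + d + 1)]
  simp only [show q + d + s + r + 2 - (r + a) = e + d + 1 from by omega,
    show q + s + r + 1 - (r + a) = e from by omega,
    show r + a - a = r from by omega,
    show q + s - s = q from by omega,
    show q + d + s + 1 - s = q + d + 1 from by omega,
    show s + r + 1 - s = r + 1 from by omega,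
    show q + d + s + r + 2 - (e + d) = r + a + 1 from by omega,
    show q + d + s + 1 - (e + d) = a from by omega,
    show e + d - e = d from by omega,
    show q + s + r + 1 - q = s + r + 1 from by omega,
    show q + s - q = s from by omega,
    show q + d + 1 - q = d + 1 from by omega]
  rw [Nat.factorial_succ (e + d), Nat.factorial_succ (r + a),
      Nat.factorial_succ d, Nat.factorial_succ r]
  have f : ∀ n : ℕ, ((n.factorial : ℕ) : ℚ) ≠ 0 := fun n =>
    Nat.cast_ne_zero.2 (Nat.factorial_ne_zero n)
  have g : ∀ n : ℕ, ((n : ℕ) : ℚ) + 1 ≠ 0 := fun n => by positivity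
  push_cast
  field_simp



open YoungDiagram

/-- Entries of `T` are all `< m`.  Entries are 0-based: the value `v` represents the
positive integer `v + 1`, so this says all (1-based) entries are at most `m`. -/
def EntryLE (μ : YoungDiagram) (T : SemistandardYoungTableau μ) (m : ℕ) : Prop :=
  ∀ i j : ℕ, (i, j) ∈ μ → T i j < m

/-- `T` is quasi-Yamanouchi: whenever a value `v > 0` appears, the leftmost
occurrence of `v` is weakly left of some occurrence of `v - 1`; equivalently some
occurrence of `v` is weakly left of some occurrence of `v - 1`. -/
def IsQY (μ : YoungDiagram) (T : SemistandardYoungTableau μ) : Prop :=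
  ∀ v : ℕ, 0 < v → (∃ i j : ℕ, (i, j) ∈ μ ∧ T i j = v) →
    ∃ i j i' j' : ℕ, (i, j) ∈ μ ∧ (i', j') ∈ μ ∧ T i j = v ∧ T i' j' = v - 1 ∧ j ≤ j'

/-- The maximum (1-based) entry of `T` is exactly `m`: all entries are `< m`
(0-based) and the value `m - 1` appears. -/
def MaxEq (μ : YoungDiagram) (T : SemistandardYoungTableau μ) (m : ℕ) : Prop :=
  EntryLE μ T m ∧ ∃ i j : ℕ, (i, j) ∈ μ ∧ T i j = m - 1

/-- The number of quasi-Yamanouchi tableaux of shape `μ` with maximum entry exactly `m`. -/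
noncomputable def QYTeq (μ : YoungDiagram) (m : ℕ) : ℕ :=
  Nat.card {T : SemistandardYoungTableau μ // IsQY μ T ∧ MaxEq μ T m}

/-- The number of semistandard Young tableaux of shape `μ` with entries at most `m`. -/
noncomputable def SSYTle (μ : YoungDiagram) (m : ℕ) : ℕ :=
  Nat.card {T : SemistandardYoungTableau μ // EntryLE μ T m}

/-- `T` is a standard Young tableau: each of the values `0, …, μ.card - 1`
(representing `1, …, n`) appears exactly once. -/
def IsSYT (μ : YoungDiagram) (T : SemistandardYoungTableau μ) : Prop :=
  ∀ v : ℕ, v < μ.card → ∃! p : ℕ × ℕ, p ∈ μ ∧ T p.1 p.2 = v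

/-- The number of standard Young tableaux of shape `μ`. -/
noncomputable def SYTcount (μ : YoungDiagram) : ℕ :=
  Nat.card {T : SemistandardYoungTableau μ // IsSYT μ T}

/-- The descent set of a standard tableau, in the paper's 1-based labelling:
`d ∈ Des T` iff `1 ≤ d ≤ n - 1` and the (1-based) entry `d + 1` (0-based value `d`)
appears weakly left of the (1-based) entry `d` (0-based value `d - 1`). -/
def Des (μ : YoungDiagram) (T : SemistandardYoungTableau μ) : Set ℕ :=
  {d | 1 ≤ d ∧ d ≤ μ.card - 1 ∧
    ∃ i j i' j' : ℕ, (i, j) ∈ μ ∧ (i', j') ∈ μ ∧ T i j = d ∧ T i' j' = d - 1 ∧ j ≤ j'}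

/-- One destandardization step at value `v`: every occurrence of `v` lies strictly
right of every occurrence of `v - 1` (in particular vacuously if no `v - 1` appears),
and `T'` is obtained from `T` by decrementing every entry equal to `v` to `v - 1`. -/
def StepAt (μ : YoungDiagram) (T T' : SemistandardYoungTableau μ) (v : ℕ) : Prop :=
  0 < v ∧ (∃ i j : ℕ, (i, j) ∈ μ ∧ T i j = v) ∧
    (∀ i j i' j' : ℕ, (i, j) ∈ μ → (i', j') ∈ μ → T i j = v → T i' j' = v - 1 → j' < j) ∧
    (∀ i j : ℕ, (i, j) ∈ μ → T' i j = if T i j = v then v - 1 else T i j)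

/-- One destandardization step (at some value). -/
def Step (μ : YoungDiagram) (T T' : SemistandardYoungTableau μ) : Prop :=
  ∃ v : ℕ, StepAt μ T T' v

/-- `Q` is the destandardization of `T`: it is reachable from `T` by destandardization
steps and no further step applies to it. -/
def IsDst (μ : YoungDiagram) (T Q : SemistandardYoungTableau μ) : Prop :=
  Relation.ReflTransGen (Step μ) T Q ∧ ∀ Q' : SemistandardYoungTableau μ, ¬ Step μ Q Q'

/-- The hook length of the box in row `i`, column `j` of `μ`. -/
def hookLength (μ : YoungDiagram) (i j : ℕ) : ℕ :=
  (μ.rowLen i - j) + (μ.colLen j - i) - 1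

/-- The hook-content product `∏_{u ∈ μ} (k + c(u)) / h(u)` where `c(u)` is the
content (column minus row) and `h(u)` the hook length. -/
noncomputable def hookContent (μ : YoungDiagram) (k : ℕ) : ℚ :=
  ∏ c ∈ μ.cells, ((k : ℚ) + (c.2 : ℚ) - (c.1 : ℚ)) / (hookLength μ c.1 c.2 : ℚ)

/-- `μ` is the partition `(l1, l2, 2^{h2-2}, 1^{h1-h2})`: first row `l1`, second row
`l2`, rows `2, …, h2 - 1` of length `2`, rows `h2, …, h1 - 1` of length `1`, and no
other rows; so the first column has height `h1` and the second column height `h2`. -/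
def HasRows2 (μ : YoungDiagram) (l1 l2 h1 h2 : ℕ) : Prop :=
  μ.rowLen 0 = l1 ∧ μ.rowLen 1 = l2 ∧
    (∀ i : ℕ, 2 ≤ i → i < h2 → μ.rowLen i = 2) ∧
    (∀ i : ℕ, h2 ≤ i → i < h1 → μ.rowLen i = 1) ∧
    (∀ i : ℕ, h1 ≤ i → μ.rowLen i = 0)

/-- the symmetry identity between the two product formulas, where
`m' = λ₁ + λ₂ + h₁ + h₂ - 3 - m`. -/
theorem product_formula_symmetry (l1 l2 h1 h2 m : ℕ)
    (hl2 : 2 ≤ l2) (hl : l2 ≤ l1) (hh2 : 2 ≤ h2) (hh : h2 ≤ h1)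
    (hm1 : h1 ≤ m) (hm2 : m ≤ h1 + h2 + l2 - 3) :
    ((l1 - l2 + 1 : ℕ) : ℚ) / ((m - h2 + 1 : ℕ) : ℚ) *
      ((l1 + h1 - 2).choose (m - h2) : ℚ) * ((l2 + h1 - 3).choose (m - h2) : ℚ) *
      ((m - h2).choose (m - h1) : ℚ) * ((l2 + h2 - 4).choose (h2 - 2) : ℚ) *
      ((l1 + h2 - 3).choose (h2 - 2) : ℚ) / (((h1 - 1).choose (h2 - 2) : ℕ) : ℚ) =
    ((h1 - h2 + 1 : ℕ) : ℚ) / (((l1 + l2 + h1 + h2 - 3 - m) - l2 + 1 : ℕ) : ℚ) *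
      ((h1 + l1 - 2).choose ((l1 + l2 + h1 + h2 - 3 - m) - l2) : ℚ) *
      ((h2 + l1 - 3).choose ((l1 + l2 + h1 + h2 - 3 - m) - l2) : ℚ) *
      (((l1 + l2 + h1 + h2 - 3 - m) - l2).choose ((l1 + l2 + h1 + h2 - 3 - m) - l1) : ℚ) *
      ((h1 + l2 - 3).choose (l2 - 2) : ℚ) * ((h2 + l2 - 4).choose (l2 - 2) : ℚ) /
      (((l1 - 1).choose (l2 - 2) : ℕ) : ℚ) := by
  
  obtain ⟨q, rfl⟩ : ∃ q, l2 = q + 2 := ⟨l2 - 2, by omega⟩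
  obtain ⟨d, rfl⟩ : ∃ d, l1 = q + 2 + d := ⟨l1 - (q + 2), by omega⟩
  obtain ⟨s, rfl⟩ : ∃ s, h2 = s + 2 := ⟨h2 - 2, by omega⟩
  obtain ⟨r, rfl⟩ : ∃ r, h1 = s + 2 + r := ⟨h1 - (s + 2), by omega⟩
  obtain ⟨a, rfl⟩ : ∃ a, m = s + 2 + r + a := ⟨m - (s + 2 + r), by omega⟩
  obtain ⟨e, hae⟩ : ∃ e, a + e = q + s + 1 := ⟨q + s + 1 - a, by omega⟩
  simp only [show q + 2 + d - (q + 2) + 1 = d + 1 from by omega,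
    show s + 2 + r + a - (s + 2) + 1 = r + a + 1 from by omega,
    show q + 2 + d + (s + 2 + r) - 2 = q + d + s + r + 2 from by omega,
    show s + 2 + r + a - (s + 2) = r + a from by omega,
    show q + 2 + (s + 2 + r) - 3 = q + s + r + 1 from by omega,
    show s + 2 + r + a - (s + 2 + r) = a from by omega,
    show q + 2 + (s + 2) - 4 = q + s from by omega,
    show s + 2 - 2 = s from by omega,
    show q + 2 + d + (s + 2) - 3 = q + d + s + 1 from by omega,
    show s + 2 + r - 1 = s + r + 1 from by omega,
    show s + 2 + r - (s + 2) + 1 = r + 1 from by omega,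
    show q + 2 + d + (q + 2) + (s + 2 + r) + (s + 2) - 3 - (s + 2 + r + a) - (q + 2) + 1 = e + d + 1 from by omega,
    show s + 2 + r + (q + 2 + d) - 2 = q + d + s + r + 2 from by omega,
    show q + 2 + d + (q + 2) + (s + 2 + r) + (s + 2) - 3 - (s + 2 + r + a) - (q + 2) = e + d from by omega,
    show s + 2 + (q + 2 + d) - 3 = q + d + s + 1 from by omega,
    show q + 2 + d + (q + 2) + (s + 2 + r) + (s + 2) - 3 - (s + 2 + r + a) - (q + 2 + d) = e from by omega,
    show s + 2 + r + (q + 2) - 3 = q + s + r + 1 from by omega,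
    show q + 2 - 2 = q from by omega,
    show s + 2 + (q + 2) - 4 = q + s from by omega,
    show q + 2 + d - 1 = q + d + 1 from by omega]
  exact key q d s r a e hae
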